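/- If φ is a semifinite harmonic function on a graded graph Γ, then for every vertex λ with φ(λ) = +∞ there exists a vertex μ ≥ λ with 0 < φ(μ) < +∞. -/

import Mathlib

open Filter Topology ENNReal
open scoped Classical

noncomputable section

structure GradedGraph where
  V : Type
  lvl : V → ℕ
  levelFinite : ∀ n : ℕ, {v : V | lvl v = n}.Finite
  k : V → V → ℝ
  k_nonneg : ∀ a b, 0 ≤ k a b
  k_grade : ∀ a b, k a b ≠ 0 → lvl b = lvl a + 1
  exists_up : ∀ a, ∃ b, 0 < k a b

namespace GradedGraph

variable (G : GradedGraph)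

/-- The edge relation `λ ↗ μ`. -/
def Adj (a b : G.V) : Prop := 0 < G.k a b

/-- The path order: `a ≤ b` iff there is a (possibly empty) path from `a` to `b`. -/
def Le : G.V → G.V → Prop := Relation.ReflTransGen G.Adj

/-- `dimAux n a b` : weighted number of paths of length `n` from `a` to `b`. -/
def dimAux : ℕ → G.V → G.V → ℝ
  | 0, a, b => if a = b then 1 else 0
  | n + 1, a, b => ∑ᶠ c, dimAux n a c * G.k c b

/-- The shifted dimension `dim(a,b)`: weighted number of paths from `a` to `b`. -/
def dim (a b : G.V) : ℝ := G.dimAux (G.lvl b - G.lvl a) a b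

def IsIdeal (I : Set G.V) : Prop := ∀ a ∈ I, ∀ b, G.Le a b → b ∈ I

def IsCoideal (J : Set G.V) : Prop := ∀ a ∈ J, ∀ b, G.Le b a → b ∈ J

def IsSaturatedIdeal (I : Set G.V) : Prop :=
  G.IsIdeal I ∧ ∀ a, (∀ b, G.Adj a b → b ∈ I) → a ∈ I

def IsSaturatedCoideal (J : Set G.V) : Prop :=
  G.IsCoideal J ∧ ∀ a ∈ J, ∃ b ∈ J, G.Adj a b

def IsPrimitiveCoideal (J : Set G.V) : Prop :=
  G.IsSaturatedCoideal J ∧ ∀ J1 J2 : Set G.V, G.IsSaturatedCoideal J1 →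
    G.IsSaturatedCoideal J2 → J = J1 ∪ J2 → J = J1 ∨ J = J2

/-- A harmonic function `φ : Γ → ℝ≥0 ∪ {+∞}`. -/
def Harmonic (φ : G.V → ℝ≥0∞) : Prop :=
  ∀ a, φ a = ∑ᶠ b, ENNReal.ofReal (G.k a b) * φ b

/-- The submodule of relations `λ = Σ_{μ : λ↗μ} κ(λ,μ)·μ` in the free module on vertices. -/
def relSub : Submodule ℝ (G.V →₀ ℝ) :=
  Submodule.span ℝ
    {x | ∃ a : G.V, x = Finsupp.single a 1 - ∑ᶠ b, G.k a b • Finsupp.single b (1 : ℝ)}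

/-- The group `K_0(Γ)`. -/
abbrev K0 := (G.V →₀ ℝ) ⧸ G.relSub

def toK0 : (G.V →₀ ℝ) →ₗ[ℝ] G.K0 := G.relSub.mkQ

/-- The class of a vertex in `K_0(Γ)`. -/
def vtx (a : G.V) : G.K0 := G.toK0 (Finsupp.single a 1)

/-- The positive cone `K_0^+(Γ)` generated by the vertices. -/
def cone : Set G.K0 := {x | ∃ c : G.V →₀ ℝ, (∀ a, 0 ≤ c a) ∧ x = G.toK0 c}

/-- The partial order `x ≤_K y` defined by the cone. -/
def leK (x y : G.K0) : Prop := y - x ∈ G.cone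

/-- The value of (the `ℝ≥0`-linear extension of) `φ` on a nonnegative element of the
free module on vertices. -/
def evalC (φ : G.V → ℝ≥0∞) (c : G.V →₀ ℝ) : ℝ≥0∞ :=
  ∑ a ∈ c.support, ENNReal.ofReal (c a) * φ a

/-- A semifinite harmonic function: it is harmonic, not everywhere finite, and its value
on any element of the cone is the supremum of its finite values on smaller cone elements
(stated on nonnegative representatives). -/
def Semifinite (φ : G.V → ℝ≥0∞) : Prop :=
  G.Harmonic φ ∧ (∃ a, φ a = ⊤) ∧
    ∀ c : G.V →₀ ℝ, (∀ a, 0 ≤ c a) →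
      G.evalC φ c = ⨆ d : {d : G.V →₀ ℝ //
        (∀ a, 0 ≤ d a) ∧ G.leK (G.toK0 d) (G.toK0 c) ∧ G.evalC φ d ≠ ⊤},
          G.evalC φ d.1

/-- A finite or semifinite harmonic function. -/
def FinOrSemifinite (φ : G.V → ℝ≥0∞) : Prop :=
  (G.Harmonic φ ∧ ∀ a, φ a ≠ ⊤) ∨ G.Semifinite φ

/-- An indecomposable (finite or semifinite, not identically zero) harmonic function:
any finite or semifinite harmonic `ψ ≤ φ` not vanishing identically on the finiteness
ideal of `φ` is proportional to `φ` on the finiteness ideal of `φ`. -/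
def Indecomposable (φ : G.V → ℝ≥0∞) : Prop :=
  G.FinOrSemifinite φ ∧ (∃ a, φ a ≠ 0) ∧
    ∀ ψ : G.V → ℝ≥0∞, G.FinOrSemifinite ψ → (∀ a, ψ a ≤ φ a) →
      (∃ a, φ a ≠ ⊤ ∧ ψ a ≠ 0) →
        ∃ C : ℝ≥0∞, ∀ a, φ a ≠ ⊤ → ψ a = C * φ a

end GradedGraph

structure BranchingGraph extends GradedGraph where
  root : V
  root_lvl : lvl root = 0
  root_unique : ∀ v, lvl v = 0 → v = root
  exists_down : ∀ v, lvl v ≠ 0 → ∃ u, 0 < k u v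

end

noncomputable section

namespace GradedGraph

variable (G : GradedGraph)

/-- Finset of level-`n` vertices. -/
def La (n : ℕ) : Finset G.V := (G.levelFinite n).toFinset

lemma mem_La {n : ℕ} {v : G.V} : v ∈ G.La n ↔ G.lvl v = n :=
  Set.Finite.mem_toFinset _

lemma dimAux_nonneg : ∀ (m : ℕ) (a b : G.V), 0 ≤ G.dimAux m a b
  | 0, a, b => by unfold dimAux; split <;> norm_num
  | m + 1, a, b => by
    unfold dimAux
    exact finsum_nonneg fun c => mul_nonneg (dimAux_nonneg m a c) (G.k_nonneg c b)

lemma dimAux_lvl : ∀ (m : ℕ) (a b : G.V), G.dimAux m a b ≠ 0 → G.lvl b = G.lvl a + m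
  | 0, a, b, h => by
    unfold dimAux at h
    split at h
    · subst ‹a = b›; simp
    · exact absurd rfl h
  | m + 1, a, b, h => by
    unfold dimAux at h
    have : ∃ c, G.dimAux m a c * G.k c b ≠ 0 := by
      by_contra hc
      push_neg at hc
      exact h (finsum_eq_zero_of_forall_eq_zero hc)
    obtain ⟨c, hc⟩ := this
    have h1 : G.dimAux m a c ≠ 0 := left_ne_zero_of_mul hc
    have h2 : G.k c b ≠ 0 := right_ne_zero_of_mul hc
    rw [G.k_grade c b h2, dimAux_lvl m a c h1]
    omega

lemma dimAux_le : ∀ (m : ℕ) (a b : G.V), G.dimAux m a b ≠ 0 → G.Le a b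
  | 0, a, b, h => by
    unfold dimAux at h
    split at h
    · subst ‹a = b›; exact Relation.ReflTransGen.refl
    · exact absurd rfl h
  | m + 1, a, b, h => by
    unfold dimAux at h
    have : ∃ c, G.dimAux m a c * G.k c b ≠ 0 := by
      by_contra hc
      push_neg at hc
      exact h (finsum_eq_zero_of_forall_eq_zero hc)
    obtain ⟨c, hc⟩ := this
    have h1 : G.dimAux m a c ≠ 0 := left_ne_zero_of_mul hc
    have h2 : G.k c b ≠ 0 := right_ne_zero_of_mul hc
    exact Relation.ReflTransGen.tail (dimAux_le m a c h1)
      (lt_of_le_of_ne (G.k_nonneg c b) (Ne.symm h2))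

/-- Top decomposition of paths. -/
lemma dimAux_succ_top (m : ℕ) (a b : G.V) :
    G.dimAux (m + 1) a b = ∑ c ∈ G.La (G.lvl a + m), G.dimAux m a c * G.k c b := by
  show (∑ᶠ c, G.dimAux m a c * G.k c b) = _
  apply finsum_eq_sum_of_support_subset
  intro c hc
  have h1 : G.dimAux m a c ≠ 0 := left_ne_zero_of_mul hc
  simpa [La, Set.Finite.coe_toFinset] using G.dimAux_lvl m a c h1

/-- Bottom decomposition of paths. -/
lemma dimAux_succ_bot : ∀ (m : ℕ) (a b : G.V),
    G.dimAux (m + 1) a b = ∑ c ∈ G.La (G.lvl a + 1), G.k a c * G.dimAux m c b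
  | 0, a, b => by
    rw [G.dimAux_succ_top 0 a b]
    rw [Finset.sum_eq_single a (fun x _ hx => by
        simp [dimAux, Ne.symm hx])
      (fun ha => by simp [G.mem_La] at ha)]
    rw [Finset.sum_eq_single b (fun x _ hx => by simp [dimAux, hx])
      (fun hb => by
        have : G.k a b = 0 := by
          by_contra hk
          exact hb (G.mem_La.2 (G.k_grade a b hk))
        simp [this])]
    simp [dimAux]
  | m + 1, a, b => by
    rw [G.dimAux_succ_top (m + 1) a b]
    have hIH : ∀ c, G.dimAux (m + 1) a c = ∑ e ∈ G.La (G.lvl a + 1), G.k a e * G.dimAux m e c :=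
      fun c => dimAux_succ_bot m a c
    calc (∑ c ∈ G.La (G.lvl a + (m + 1)), G.dimAux (m + 1) a c * G.k c b)
        = ∑ c ∈ G.La (G.lvl a + (m + 1)), ∑ e ∈ G.La (G.lvl a + 1),
            G.k a e * G.dimAux m e c * G.k c b := by
          refine Finset.sum_congr rfl fun c _ => ?_
          rw [hIH c, Finset.sum_mul]
      _ = ∑ e ∈ G.La (G.lvl a + 1), ∑ c ∈ G.La (G.lvl a + (m + 1)),
            G.k a e * (G.dimAux m e c * G.k c b) := by
          rw [Finset.sum_comm]
          exact Finset.sum_congr rfl fun e _ => Finset.sum_congr rfl fun c _ => mul_assoc _ _ _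
      _ = ∑ e ∈ G.La (G.lvl a + 1), G.k a e * G.dimAux (m + 1) e b := by
          refine Finset.sum_congr rfl fun e he => ?_
          rw [← Finset.mul_sum, G.dimAux_succ_top m e b]
          have : G.lvl e + m = G.lvl a + (m + 1) := by
            rw [G.mem_La.1 he]; omega
          rw [this]

variable {G}

lemma harmonic_sum {φ : G.V → ℝ≥0∞} (hφ : G.Harmonic φ) (a : G.V) :
    φ a = ∑ b ∈ G.La (G.lvl a + 1), ENNReal.ofReal (G.k a b) * φ b := by
  rw [hφ a]
  apply finsum_eq_sum_of_support_subset
  intro b hb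
  have hk : G.k a b ≠ 0 := by
    intro h0
    simp [h0] at hb
  simpa [La, Set.Finite.coe_toFinset] using G.k_grade a b hk

lemma harmonic_iter {φ : G.V → ℝ≥0∞} (hφ : G.Harmonic φ) :
    ∀ (m : ℕ) (a : G.V),
      φ a = ∑ w ∈ G.La (G.lvl a + m), ENNReal.ofReal (G.dimAux m a w) * φ w
  | 0, a => by
    rw [Finset.sum_eq_single_of_mem a (G.mem_La.2 (by simp))
      (fun w _ hw => by simp [dimAux, Ne.symm hw])]
    simp [dimAux]
  | m + 1, a => by
    rw [harmonic_iter hφ m a]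
    calc (∑ w ∈ G.La (G.lvl a + m), ENNReal.ofReal (G.dimAux m a w) * φ w)
        = ∑ w ∈ G.La (G.lvl a + m), ∑ b ∈ G.La (G.lvl a + m + 1),
            ENNReal.ofReal (G.dimAux m a w * G.k w b) * φ b := by
          refine Finset.sum_congr rfl fun w hw => ?_
          have hlw : G.lvl w = G.lvl a + m := G.mem_La.1 hw
          rw [harmonic_sum hφ w, hlw, Finset.mul_sum]
          refine Finset.sum_congr rfl fun b _ => ?_
          rw [ENNReal.ofReal_mul (G.dimAux_nonneg m a w), mul_assoc]
      _ = ∑ b ∈ G.La (G.lvl a + m + 1),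
            (∑ w ∈ G.La (G.lvl a + m), ENNReal.ofReal (G.dimAux m a w * G.k w b)) * φ b := by
          rw [Finset.sum_comm]
          exact Finset.sum_congr rfl fun b _ => (Finset.sum_mul _ _ _).symm
      _ = ∑ w ∈ G.La (G.lvl a + (m + 1)), ENNReal.ofReal (G.dimAux (m + 1) a w) * φ w := by
          refine Finset.sum_congr rfl fun b _ => ?_
          rw [← ENNReal.ofReal_sum_of_nonneg
            (fun w _ => mul_nonneg (G.dimAux_nonneg m a w) (G.k_nonneg w b)),
            ← G.dimAux_succ_top m a b]

variable (G)

/-- Backward harmonic extension of `(φ ·).toReal` from level `N`. -/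
def hfun (φ : G.V → ℝ≥0∞) (N : ℕ) (v : G.V) : ℝ :=
  ∑ w ∈ G.La N, G.dimAux (N - G.lvl v) v w * (φ w).toReal

lemma hfun_nonneg (φ : G.V → ℝ≥0∞) (N : ℕ) (v : G.V) : 0 ≤ G.hfun φ N v :=
  Finset.sum_nonneg fun w _ =>
    mul_nonneg (G.dimAux_nonneg _ v w) ENNReal.toReal_nonneg

lemma hfun_harm (φ : G.V → ℝ≥0∞) {N : ℕ} {a : G.V} (hN : G.lvl a < N) :
    G.hfun φ N a = ∑ b ∈ G.La (G.lvl a + 1), G.k a b * G.hfun φ N b := by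
  have hm : N - G.lvl a = (N - G.lvl a - 1) + 1 := by omega
  set m := N - G.lvl a - 1 with hmdef
  unfold hfun
  rw [hm]
  calc (∑ w ∈ G.La N, G.dimAux (m + 1) a w * (φ w).toReal)
      = ∑ w ∈ G.La N, ∑ b ∈ G.La (G.lvl a + 1),
          G.k a b * (G.dimAux m b w * (φ w).toReal) := by
        refine Finset.sum_congr rfl fun w _ => ?_
        rw [G.dimAux_succ_bot m a w, Finset.sum_mul]
        exact Finset.sum_congr rfl fun b _ => mul_assoc _ _ _
    _ = ∑ b ∈ G.La (G.lvl a + 1), G.k a b *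
          ∑ w ∈ G.La N, G.dimAux m b w * (φ w).toReal := by
        rw [Finset.sum_comm]
        exact Finset.sum_congr rfl fun b _ => (Finset.mul_sum _ _ _).symm
    _ = ∑ b ∈ G.La (G.lvl a + 1), G.k a b *
          ∑ w ∈ G.La N, G.dimAux (N - G.lvl b) b w * (φ w).toReal := by
        refine Finset.sum_congr rfl fun b hb => ?_
        have : N - G.lvl b = m := by
          rw [G.mem_La.1 hb]; omega
        rw [this]

lemma pairing_zero (φ : G.V → ℝ≥0∞) {r : G.V →₀ ℝ} (hr : r ∈ G.relSub) :
    ∃ N₀ : ℕ, ∀ N, N₀ ≤ N → Finsupp.linearCombination ℝ (G.hfun φ N) r = 0 := by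
  induction hr using Submodule.span_induction with
  | mem x hx =>
    obtain ⟨a, hxa⟩ := hx
    refine ⟨G.lvl a + 1, fun N hN => ?_⟩
    subst hxa
    have hsupp : (Function.support fun b => G.k a b • Finsupp.single b (1 : ℝ)) ⊆
        ↑(G.La (G.lvl a + 1)) := by
      intro b hb
      have hk : G.k a b ≠ 0 := by
        intro h0
        simp [h0] at hb
      simpa [La, Set.Finite.coe_toFinset] using G.k_grade a b hk
    rw [finsum_eq_sum_of_support_subset _ hsupp, map_sub, map_sum,
      Finsupp.linearCombination_single]
    have : ∀ b ∈ G.La (G.lvl a + 1),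
        Finsupp.linearCombination ℝ (G.hfun φ N) (G.k a b • Finsupp.single b (1 : ℝ))
          = G.k a b * G.hfun φ N b := by
      intro b _
      rw [map_smul, Finsupp.linearCombination_single]
      simp [smul_eq_mul]
    rw [Finset.sum_congr rfl this]
    have := G.hfun_harm φ (N := N) (a := a) (by omega)
    simp [this]
  | zero => exact ⟨0, fun N _ => by simp⟩
  | add x y hx hy ihx ihy =>
    obtain ⟨N₁, h₁⟩ := ihx
    obtain ⟨N₂, h₂⟩ := ihy
    exact ⟨max N₁ N₂, fun N hN => by
      rw [map_add, h₁ N (le_trans (le_max_left _ _) hN),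
        h₂ N (le_trans (le_max_right _ _) hN), add_zero]⟩
  | smul c x hx ihx =>
    obtain ⟨N₁, h₁⟩ := ihx
    exact ⟨N₁, fun N hN => by rw [map_smul, h₁ N hN, smul_zero]⟩

end GradedGraph

end

/-- if `φ` is semifinite and `φ(λ) = +∞`, then some `μ ≥ λ` has
`0 < φ(μ) < +∞`. -/
theorem semifinite_exists_finite_majorant (G : GradedGraph) (φ : G.V → ℝ≥0∞)
    (hφ : G.Semifinite φ) (lam : G.V) (hlam : φ lam = ⊤) :
    ∃ μ, G.Le lam μ ∧ φ μ ≠ 0 ∧ φ μ ≠ ⊤ := by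
  classical
  by_contra hcon
  push_neg at hcon
  have H : ∀ μ, G.Le lam μ → φ μ = 0 ∨ φ μ = ⊤ := by
    intro μ hμ
    by_cases h0 : φ μ = 0
    · exact Or.inl h0
    · exact Or.inr (hcon μ hμ h0)
  obtain ⟨hharm, -, hsup⟩ := hφ
  -- evaluate the semifinite condition at `single lam 1`
  have hc : ∀ v, 0 ≤ (Finsupp.single lam (1 : ℝ)) v := by
    intro v
    rw [Finsupp.single_apply]
    split <;> norm_num
  have heval : G.evalC φ (Finsupp.single lam (1 : ℝ)) = φ lam := by
    unfold GradedGraph.evalC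
    rw [Finsupp.support_single_ne_zero _ one_ne_zero]
    simp
  have htop := hsup (Finsupp.single lam (1 : ℝ)) hc
  rw [heval, hlam] at htop
  have hlt : (0 : ℝ≥0∞) < ⨆ d : {d : G.V →₀ ℝ //
      (∀ a, 0 ≤ d a) ∧ G.leK (G.toK0 d) (G.toK0 (Finsupp.single lam (1 : ℝ))) ∧
        G.evalC φ d ≠ ⊤}, G.evalC φ d.1 := by
    rw [← htop]; exact ENNReal.zero_lt_top
  rw [lt_iSup_iff] at hlt
  obtain ⟨⟨d, hd0, hdle, hdfin⟩, hdpos⟩ := hlt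
  simp only at hdpos
  -- find a vertex `a` in the support of `d` with `0 < φ a < ⊤`
  have hex : ∃ a ∈ d.support, ENNReal.ofReal (d a) * φ a ≠ 0 := by
    by_contra h'
    push_neg at h'
    have : G.evalC φ d = 0 := Finset.sum_eq_zero h'
    rw [this] at hdpos
    exact lt_irrefl _ hdpos
  obtain ⟨a, had, hane⟩ := hex
  have hda : ENNReal.ofReal (d a) ≠ 0 := fun h => hane (by rw [h, zero_mul])
  have hφa0 : φ a ≠ 0 := fun h => hane (by rw [h, mul_zero])
  have hφatop : φ a ≠ ⊤ := by
    intro htop'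
    apply hdfin
    have hle : ENNReal.ofReal (d a) * φ a ≤ G.evalC φ d :=
      Finset.single_le_sum (f := fun a => ENNReal.ofReal (d a) * φ a)
        (fun i _ => zero_le) had
    rw [htop', ENNReal.mul_top hda] at hle
    exact top_le_iff.mp hle
  -- extract the relation witness
  obtain ⟨e, he0, hee⟩ := hdle
  have hr : Finsupp.single lam (1 : ℝ) - d - e ∈ G.relSub := by
    have h2 : G.toK0 (Finsupp.single lam (1 : ℝ) - d - e) = 0 := by
      rw [map_sub, map_sub, ← hee]
      abel
    have h3 : Submodule.Quotient.mk (p := G.relSub)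
        (Finsupp.single lam (1 : ℝ) - d - e) = 0 := h2
    exact (Submodule.Quotient.mk_eq_zero _).mp h3
  obtain ⟨N₀, hN₀⟩ := G.pairing_zero φ hr
  set N := max N₀ (G.lvl a) with hNdef
  set h := G.hfun φ N with hhdef
  set L := Finsupp.linearCombination ℝ h with hLdef
  have hLr : L (Finsupp.single lam (1 : ℝ) - d - e) = 0 := hN₀ N (le_max_left _ _)
  -- hfun vanishes at lam
  have hhlam : h lam = 0 := by
    rw [hhdef]
    unfold GradedGraph.hfun
    apply Finset.sum_eq_zero
    intro w _
    by_cases hdw : G.dimAux (N - G.lvl lam) lam w = 0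
    · rw [hdw, zero_mul]
    · rcases H w (G.dimAux_le _ lam w hdw) with h0 | h0 <;> simp [h0]
  -- hfun is positive at a
  have hha : 0 < h a := by
    have hlaN : G.lvl a + (N - G.lvl a) = N := by omega
    have hiter := GradedGraph.harmonic_iter hharm (N - G.lvl a) a
    rw [hlaN] at hiter
    have hex2 : ∃ w ∈ G.La N,
        ENNReal.ofReal (G.dimAux (N - G.lvl a) a w) * φ w ≠ 0 := by
      by_contra h'
      push_neg at h'
      rw [Finset.sum_eq_zero h'] at hiter
      exact hφa0 hiter
    obtain ⟨w, hw, hwne⟩ := hex2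
    have hdimw : ENNReal.ofReal (G.dimAux (N - G.lvl a) a w) ≠ 0 :=
      fun h0 => hwne (by rw [h0, zero_mul])
    have hφw0 : φ w ≠ 0 := fun h0 => hwne (by rw [h0, mul_zero])
    have hφwtop : φ w ≠ ⊤ := by
      intro h0
      apply hφatop
      have hle : ENNReal.ofReal (G.dimAux (N - G.lvl a) a w) * φ w ≤ φ a := by
        rw [hiter]
        exact Finset.single_le_sum
          (f := fun w => ENNReal.ofReal (G.dimAux (N - G.lvl a) a w) * φ w)
          (fun i _ => zero_le) hw
      rw [h0, ENNReal.mul_top hdimw] at hle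
      exact top_le_iff.mp hle
    have hdimpos : 0 < G.dimAux (N - G.lvl a) a w :=
      lt_of_le_of_ne (G.dimAux_nonneg _ a w)
        (fun h0 => hdimw (by rw [← h0, ENNReal.ofReal_zero]))
    rw [hhdef]
    unfold GradedGraph.hfun
    apply Finset.sum_pos' (fun i _ =>
      mul_nonneg (G.dimAux_nonneg _ a i) ENNReal.toReal_nonneg)
    exact ⟨w, hw, mul_pos hdimpos (ENNReal.toReal_pos hφw0 hφwtop)⟩
  -- nonnegativity of pairings
  have hLd : (d a) * h a ≤ L d := by
    rw [hLdef, Finsupp.linearCombination_apply, Finsupp.sum]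
    have : d a • h a ≤ ∑ i ∈ d.support, d i • h i :=
      Finset.single_le_sum (f := fun i => d i • h i)
        (fun i _ => smul_nonneg (hd0 i) (G.hfun_nonneg φ N i)) had
    simpa using this
  have hLe : 0 ≤ L e := by
    rw [hLdef, Finsupp.linearCombination_apply, Finsupp.sum]
    exact Finset.sum_nonneg fun i _ => smul_nonneg (he0 i) (G.hfun_nonneg φ N i)
  have hda' : 0 < d a := by
    rcases lt_or_eq_of_le (hd0 a) with h' | h'
    · exact h'
    · exact absurd (by rw [← h', ENNReal.ofReal_zero]) hda
  have hLdpos : 0 < L d := lt_of_lt_of_le (mul_pos hda' hha) hLd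
  rw [map_sub, map_sub, hLdef, Finsupp.linearCombination_single, one_smul,
    ← hLdef, hhlam] at hLr
  linarith
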